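/- In ℤ_p[x]/(x^q − 1) with p, q distinct primes, the ideal generated by (x − 1) equals the ideal generated by (x − 1)^k for every k ≥ 1. -/

import Mathlib

/-- In `𝔽_p[x]/(x^q − 1)` with `p, q` distinct primes, the ideal generated by
`x − 1` equals the ideal generated by `(x − 1)^k` for every `k ≥ 1`. -/
theorem span_X_sub_one_eq_span_pow_in_quotient
    {p q : ℕ} (hp : p.Prime) (hq : q.Prime) (hpq : p ≠ q) (k : ℕ) (hk : 1 ≤ k) :
    Ideal.span {Ideal.Quotient.mk
        (Ideal.span {(Polynomial.X : Polynomial (ZMod p)) ^ q - 1}) (Polynomial.X - 1)} =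
      Ideal.span {(Ideal.Quotient.mk
        (Ideal.span {(Polynomial.X : Polynomial (ZMod p)) ^ q - 1}) (Polynomial.X - 1)) ^ k} := by
  haveI := Fact.mk hp
  set I : Ideal (Polynomial (ZMod p)) :=
    Ideal.span {(Polynomial.X : Polynomial (ZMod p)) ^ q - 1} with hI
  set π := Ideal.Quotient.mk I with hπ
  set t := π (Polynomial.X - 1) with ht
  -- the geometric sum
  set g : Polynomial (ZMod p) := ∑ i ∈ Finset.range q, Polynomial.X ^ i with hg
  have hgeval : g.eval 1 = (q : ZMod p) := by
    simp [hg, Polynomial.eval_finset_sum]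
  have hqne : (q : ZMod p) ≠ 0 := by
    rw [Ne, ZMod.natCast_eq_zero_iff]
    intro h
    exact hpq ((Nat.prime_dvd_prime_iff_eq hp hq).mp h)
  have hnotdvd : ¬ (Polynomial.X - Polynomial.C (1 : ZMod p)) ∣ g := by
    rw [Polynomial.dvd_iff_isRoot]
    simpa [Polynomial.IsRoot, hgeval] using hqne
  have hcop : IsCoprime (Polynomial.X - Polynomial.C (1 : ZMod p)) g :=
    (Polynomial.irreducible_X_sub_C (1 : ZMod p)).coprime_iff_not_dvd.mpr hnotdvd
  obtain ⟨u, v, huv⟩ := hcop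
  have hmul : (Polynomial.X - Polynomial.C (1 : ZMod p)) * g
      = (Polynomial.X : Polynomial (ZMod p)) ^ q - 1 := by
    have := geom_sum_mul (Polynomial.X : Polynomial (ZMod p)) q
    rw [Polynomial.C_1]
    rw [mul_comm]
    simpa [hg] using this
  have hzero : t * π g = 0 := by
    rw [ht]
    rw [← map_mul]
    have : (Polynomial.X - 1 : Polynomial (ZMod p)) * g
        = (Polynomial.X : Polynomial (ZMod p)) ^ q - 1 := by
      rw [← hmul, Polynomial.C_1]
    rw [this, hπ, Ideal.Quotient.eq_zero_iff_mem, hI]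
    exact Ideal.subset_span rfl
  have ha : t = π u * t ^ 2 := by
    have h1 : π u * t + π v * π g = 1 := by
      have := congrArg π huv
      simpa [map_add, map_mul, Polynomial.C_1, ht] using this
    calc t = t * (π u * t + π v * π g) := by rw [h1, mul_one]
      _ = π u * t ^ 2 + π v * (t * π g) := by ring
      _ = π u * t ^ 2 := by rw [hzero, mul_zero, add_zero]
  set a := π u with hA
  have key : ∀ n, t = a ^ n * t ^ (n + 1) := by
    intro n
    induction n with
    | zero => simp
    | succ n ih =>
      calc t = a ^ n * t ^ (n + 1) := ih
        _ = a ^ n * t ^ n * t := by ring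
        _ = a ^ n * t ^ n * (a * t ^ 2) := by rw [← ha]
        _ = a ^ (n + 1) * t ^ (n + 1 + 1) := by ring
  apply le_antisymm
  · rw [Ideal.span_singleton_le_span_singleton]
    obtain ⟨m, rfl⟩ := Nat.exists_eq_add_of_le hk
    exact ⟨a ^ m, by rw [mul_comm, add_comm]; exact key m⟩
  · rw [Ideal.span_singleton_le_span_singleton]
    exact dvd_pow_self t (by omega)
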